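/- Work in the discrete setting. Let L be a joint pmf of (X_j, X_{-j}, Y) on finite types, fix the coordinate j and an integer K ≥ 1. Let X_j^{(1)}, …, X_j^{(K)} be additional random variables, taking values in the same finite type as X_j, such that conditionally on (X_{-j}, Y) they are i.i.d. with conditional pmf L(X_j = · | X_{-j}, Y) and are conditionally independent of X_j given (X_{-j}, Y). Let T be any real-valued function of (x_j, x_{-j}, y), and set T_0 = T(X_j, X_{-j}, Y) and T_k = T(X_j^{(k)}, X_{-j}, Y) for k = 1, …, K. Then the p-value P = (1 + #{k ∈ {1, …, K} : T_k ≥ T_0}) / (K + 1) satisfies Prob(P ≤ α) ≤ α for every α ∈ [0, 1]. -/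

import Mathlib

open scoped Classical


lemma crt_count_aux {n : ℕ} (g : Fin n → ℝ) (m : ℕ) :
    (Finset.univ.filter (fun i : Fin n =>
      (Finset.univ.filter (fun j => g i ≤ g j)).card ≤ m)).card ≤ m := by
  set A := Finset.univ.filter (fun i : Fin n =>
      (Finset.univ.filter (fun j => g i ≤ g j)).card ≤ m) with hA
  rcases A.eq_empty_or_nonempty with h | h
  · simp [h]
  · obtain ⟨i₀, hi₀, hmin⟩ := A.exists_min_image g h
    have h1 : A ⊆ Finset.univ.filter (fun j => g i₀ ≤ g j) := by
      intro a ha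
      simp only [Finset.mem_filter, Finset.mem_univ, true_and]
      exact hmin a ha
    exact le_trans (Finset.card_le_card h1) (Finset.mem_filter.mp hi₀).2

lemma crt_exchange {S : Type*} [Fintype S] {K : ℕ} (q : S → ℝ) (f : S → ℝ) (m : ℕ)
    (i : Fin (K+1)) :
    ∑ w : Fin (K+1) → S,
        (if (Finset.univ.filter (fun j => f (w i) ≤ f (w j))).card ≤ m
          then ∏ l, q (w l) else 0)
      = ∑ w : Fin (K+1) → S,
        (if (Finset.univ.filter (fun j => f (w 0) ≤ f (w j))).card ≤ m
          then ∏ l, q (w l) else 0) := by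
  set σ := Equiv.swap (0 : Fin (K+1)) i with hσ
  apply Fintype.sum_equiv (Equiv.arrowCongr σ (Equiv.refl S))
  intro w
  have hcomp : ∀ l, (Equiv.arrowCongr σ (Equiv.refl S)) w l = w (σ l) := by
    intro l
    simp [Equiv.arrowCongr, Equiv.symm_apply_eq, hσ, Equiv.swap_inv]
  have hcard : (Finset.univ.filter (fun j => f (w i) ≤ f (w j))).card
      = (Finset.univ.filter (fun j => f (w (σ 0)) ≤ f (w (σ j)))).card := by
    have hσ0 : σ 0 = i := Equiv.swap_apply_left 0 i
    rw [hσ0]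
    have : Finset.univ.filter (fun j => f (w i) ≤ f (w (σ j)))
        = (Finset.univ.filter (fun j => f (w i) ≤ f (w j))).map σ.symm.toEmbedding := by
      ext j
      simp [Finset.mem_map_equiv]
    rw [this, Finset.card_map]
  have hprod : (∏ l, q (w l)) = ∏ l, q (w (σ l)) := (Equiv.prod_comp σ (fun l => q (w l))).symm
  simp only [hcomp, hcard, hprod]

lemma crt_core {S : Type*} [Fintype S] (K : ℕ) (q : S → ℝ)
    (hq : ∀ s, 0 ≤ q s) (hq1 : ∑ s, q s = 1) (f : S → ℝ) (m : ℕ) :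
    ∑ w : Fin (K+1) → S,
        (if (Finset.univ.filter (fun j => f (w 0) ≤ f (w j))).card ≤ m
          then ∏ l, q (w l) else 0) ≤ m / (K+1) := by
  set F0 := ∑ w : Fin (K+1) → S,
        (if (Finset.univ.filter (fun j => f (w 0) ≤ f (w j))).card ≤ m
          then ∏ l, q (w l) else 0) with hF0
  have hQnn : ∀ w : Fin (K+1) → S, 0 ≤ ∏ l, q (w l) := fun w =>
    Finset.prod_nonneg (fun l _ => hq (w l))
  have hQsum : ∑ w : Fin (K+1) → S, ∏ l, q (w l) = 1 := by
    have := Finset.prod_univ_sum (fun _ : Fin (K+1) => (Finset.univ : Finset S))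
      (fun _ s => q s)
    simp only [hq1, Finset.prod_const_one, Fintype.piFinset_univ] at this
    exact this.symm
  have key : (K+1 : ℝ) * F0 ≤ m := by
    have h1 : (K+1 : ℝ) * F0 = ∑ i : Fin (K+1), ∑ w : Fin (K+1) → S,
        (if (Finset.univ.filter (fun j => f (w i) ≤ f (w j))).card ≤ m
          then ∏ l, q (w l) else 0) := by
      rw [Finset.sum_congr rfl (fun i _ => crt_exchange q f m i)]
      simp [hF0, Finset.sum_const, mul_comm]
    rw [h1, Finset.sum_comm]
    have h2 : ∀ w : Fin (K+1) → S,
        (∑ i : Fin (K+1), if (Finset.univ.filter (fun j => f (w i) ≤ f (w j))).card ≤ m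
          then ∏ l, q (w l) else 0) ≤ (m : ℝ) * ∏ l, q (w l) := by
      intro w
      have : (∑ i : Fin (K+1), if (Finset.univ.filter (fun j => f (w i) ≤ f (w j))).card ≤ m
          then ∏ l, q (w l) else 0)
          = ((Finset.univ.filter (fun i : Fin (K+1) =>
              (Finset.univ.filter (fun j => f (w i) ≤ f (w j))).card ≤ m)).card : ℝ)
            * ∏ l, q (w l) := by
        rw [← Finset.sum_filter, Finset.sum_const, nsmul_eq_mul]
      rw [this]
      apply mul_le_mul_of_nonneg_right _ (hQnn w)
      exact_mod_cast crt_count_aux (fun l => f (w l)) m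
    calc (∑ w : Fin (K+1) → S, ∑ i : Fin (K+1),
        if (Finset.univ.filter (fun j => f (w i) ≤ f (w j))).card ≤ m
          then ∏ l, q (w l) else 0)
        ≤ ∑ w : Fin (K+1) → S, (m : ℝ) * ∏ l, q (w l) :=
          Finset.sum_le_sum (fun w _ => h2 w)
      _ = m := by rw [← Finset.mul_sum, hQsum, mul_one]
  have hpos : (0:ℝ) < K + 1 := by positivity
  rw [div_eq_inv_mul, ← mul_le_mul_iff_right₀ hpos, ← mul_assoc, mul_inv_cancel₀ hpos.ne', one_mul]
  exact key

/-- **Proposition 2 (discrete form).** In a conditional randomization test on a biased sample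
with sample distribution `L`, resampling the `j`-th covariate from the sample conditional law
`L(X_j | X_{-j}, Y)` produces valid, super-uniform p-values. -/
theorem crt_tilted_resampling_pvalue_superuniform
    {𝒳j 𝒳m 𝒴 : Type*} [Fintype 𝒳j] [Fintype 𝒳m] [Fintype 𝒴]
    [Nonempty 𝒳j] [Nonempty 𝒳m] [Nonempty 𝒴]
    (K : ℕ) (hK : 1 ≤ K)
    -- joint pmf of (X_j, X_{-j}, Y, (X_j^{(1)}, …, X_j^{(K)}))
    (P : 𝒳j × 𝒳m × 𝒴 × (Fin K → 𝒳j) → ℝ)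
    (hPnn : ∀ a, 0 ≤ P a)
    (hPsum : ∑ a, P a = 1)
    -- L is the joint pmf of (X_j, X_{-j}, Y)
    (L : 𝒳j × 𝒳m × 𝒴 → ℝ)
    (hL : ∀ t x y, L (t, x, y) = ∑ v, P (t, x, y, v))
    -- conditionally on (X_{-j}, Y), the resamples X_j^{(1)}, …, X_j^{(K)} are i.i.d. with
    -- conditional pmf L(X_j = · | X_{-j}, Y) and conditionally independent of X_j
    (hcond : ∀ t x y v, 0 < (∑ s, L (s, x, y)) →
      P (t, x, y, v) / (∑ s, L (s, x, y)) =
        (L (t, x, y) / (∑ s, L (s, x, y))) *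
          ∏ k, (L (v k, x, y) / (∑ s, L (s, x, y))))
    -- an arbitrary real-valued test statistic
    (T : 𝒳j → 𝒳m → 𝒴 → ℝ)
    -- the p-value P = (1 + #{k : T_k ≥ T_0}) / (K + 1)
    (Pval : 𝒳j × 𝒳m × 𝒴 × (Fin K → 𝒳j) → ℝ)
    (hPval : ∀ t x y v, Pval (t, x, y, v) =
      (1 + ((Finset.univ.filter
        (fun k : Fin K => T t x y ≤ T (v k) x y)).card : ℝ)) / (K + 1)) :
    ∀ α : ℝ, 0 ≤ α → α ≤ 1 →
      ∑ ω ∈ Finset.univ.filter (fun ω => Pval ω ≤ α), P ω ≤ α := by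

  intro α hα0 hα1
  have hK1 : (0:ℝ) < (K:ℝ) + 1 := by positivity
  set m : ℕ := ⌊α * ((K:ℝ)+1)⌋₊ with hm
  have hmle : (m:ℝ) ≤ α * ((K:ℝ)+1) := Nat.floor_le (by positivity)
  have hLnn : ∀ t x y, 0 ≤ L (t, x, y) := by
    intro t x y; rw [hL]; exact Finset.sum_nonneg (fun v _ => hPnn _)
  -- swap helper
  have hswap : ∀ (g : 𝒳j → 𝒳m → 𝒴 → (Fin K → 𝒳j) → ℝ),
      (∑ t, ∑ x, ∑ y, ∑ v, g t x y v) = ∑ x, ∑ y, ∑ t, ∑ v, g t x y v := by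
    intro g
    rw [Finset.sum_comm]
    exact Finset.sum_congr rfl fun x _ => Finset.sum_comm
  -- total mass per (x,y) sums to 1
  have hL1 : ∑ x, ∑ y, ∑ s, L (s, x, y) = 1 := by
    simp only [hL]
    rw [← hswap (fun s x y v => P (s, x, y, v)), ← hPsum]
    simp [Fintype.sum_prod_type]
  -- rewrite goal sum
  rw [Finset.sum_filter]
  have h1 : (∑ ω : 𝒳j × 𝒳m × 𝒴 × (Fin K → 𝒳j), if Pval ω ≤ α then P ω else 0)
      = ∑ x, ∑ y, ∑ t, ∑ v, (if Pval (t, x, y, v) ≤ α then P (t, x, y, v) else 0) := by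
    rw [← hswap (fun t x y v => if Pval (t, x, y, v) ≤ α then P (t, x, y, v) else 0)]
    simp [Fintype.sum_prod_type]
  rw [h1]
  -- key conditional bound
  have keyxy : ∀ x y, (∑ t, ∑ v, if Pval (t, x, y, v) ≤ α then P (t, x, y, v) else 0)
      ≤ α * ∑ s, L (s, x, y) := by
    intro x y
    set M : ℝ := ∑ s, L (s, x, y) with hM
    have hMnn : 0 ≤ M := Finset.sum_nonneg (fun s _ => hLnn s x y)
    rcases hMnn.eq_or_lt with h0 | hMpos
    · -- zero-mass case: all P vanish
      have hP0 : ∀ t v, P (t, x, y, v) = 0 := by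
        intro t v
        have hL0 : L (t, x, y) = 0 := by
          have := (Finset.sum_eq_zero_iff_of_nonneg
            (fun s _ => hLnn s x y)).mp h0.symm t (Finset.mem_univ t)
          exact this
        have h2 : ∑ v, P (t, x, y, v) = 0 := by rw [← hL, hL0]
        exact (Finset.sum_eq_zero_iff_of_nonneg (fun v _ => hPnn _)).mp h2 v (Finset.mem_univ v)
      simp [hP0, ← h0]
    · -- positive-mass case
      set q : 𝒳j → ℝ := fun s => L (s, x, y) / M with hq
      have hqnn : ∀ s, 0 ≤ q s := fun s => div_nonneg (hLnn s x y) hMnn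
      have hq1 : ∑ s, q s = 1 := by
        rw [hq]; rw [← Finset.sum_div]; exact div_self hMpos.ne'
      have hP : ∀ t v, P (t, x, y, v) = M * (q t * ∏ k, q (v k)) := by
        intro t v
        have h := hcond t x y v hMpos
        rw [div_eq_iff hMpos.ne'] at h
        rw [h]; ring
      -- condition in natural-number form
      have hcondiff : ∀ t (v : Fin K → 𝒳j), (Pval (t, x, y, v) ≤ α) ↔
          (1 + (Finset.univ.filter
            (fun k : Fin K => T t x y ≤ T (v k) x y)).card ≤ m) := by
        intro t v
        rw [hPval, div_le_iff₀ hK1, Nat.le_floor_iff (by positivity)]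
        push_cast
        constructor <;> intro h <;> linarith
      -- reindex to Fin (K+1) tuples
      have hsum2 : (∑ t, ∑ v, if Pval (t, x, y, v) ≤ α then P (t, x, y, v) else 0)
          = M * ∑ w : Fin (K+1) → 𝒳j,
              (if (Finset.univ.filter
                  (fun j => T (w 0) x y ≤ T (w j) x y)).card ≤ m
                then ∏ l, q (w l) else 0) := by
        rw [Finset.mul_sum]
        rw [← Fintype.sum_prod_type (f := fun p : 𝒳j × (Fin K → 𝒳j) =>
          if Pval (p.1, x, y, p.2) ≤ α then P (p.1, x, y, p.2) else 0)]
        apply Fintype.sum_equiv (Fin.consEquiv (fun _ : Fin (K+1) => 𝒳j))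
        rintro ⟨t, v⟩
        have he : (Fin.consEquiv (fun _ : Fin (K+1) => 𝒳j)) (t, v) = (Fin.cons t v : Fin (K+1) → 𝒳j) := rfl
        rw [he]
        have hc : (Finset.univ.filter (fun j : Fin (K+1) =>
              T ((Fin.cons t v : Fin (K+1) → 𝒳j) 0) x y ≤ T ((Fin.cons t v : Fin (K+1) → 𝒳j) j) x y)).card
            = 1 + (Finset.univ.filter (fun k : Fin K => T t x y ≤ T (v k) x y)).card := by
          rw [Finset.card_filter, Fin.sum_univ_succ]
          simp only [Fin.cons_zero, Fin.cons_succ, le_refl, if_true]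
          rw [Finset.card_filter]
        have hp : (∏ l : Fin (K+1), q ((Fin.cons t v : Fin (K+1) → 𝒳j) l)) = q t * ∏ k, q (v k) := by
          rw [Fin.prod_univ_succ]
          simp
        simp only [hc, hp, hcondiff, hP, mul_ite, mul_zero]
      rw [hsum2]
      have hcore := crt_core K q hqnn hq1 (fun s => T s x y) m
      calc M * ∑ w : Fin (K+1) → 𝒳j,
              (if (Finset.univ.filter
                  (fun j => T (w 0) x y ≤ T (w j) x y)).card ≤ m
                then ∏ l, q (w l) else 0)
          ≤ M * ((m : ℝ) / ((K:ℝ)+1)) := by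
            apply mul_le_mul_of_nonneg_left _ hMnn
            exact_mod_cast hcore
        _ ≤ M * α := by
            apply mul_le_mul_of_nonneg_left _ hMnn
            rw [div_le_iff₀ hK1]
            exact hmle
        _ = α * M := mul_comm _ _
  calc (∑ x, ∑ y, ∑ t, ∑ v, if Pval (t, x, y, v) ≤ α then P (t, x, y, v) else 0)
      ≤ ∑ x, ∑ y, α * ∑ s, L (s, x, y) :=
        Finset.sum_le_sum (fun x _ => Finset.sum_le_sum (fun y _ => keyxy x y))
    _ = α := by
        simp only [← Finset.mul_sum]
        rw [hL1, mul_one]
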